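/- Consider the generalized fair learning problem: minimize E_{(x,s)∼P_{X,S}}[ TV(Q_{Ŷ|X=x,S=s}, P_{Y|X=x,S=s}) ] over conditional distributions Q_{Ŷ|X,S} subject to ρ_m(Ŷ, S) ≤ ε, where Ŷ is distributed according to Q_{Ŷ|X,S} · P_{X,S} and ρ_m is the maximal correlation. Suppose there exists φ : 𝒳 × 𝒴 → ℝ such that P(X=x | Y=y, S=s) / P(X=x | S=s) = φ(x, y) for all x ∈ 𝒳, y ∈ 𝒴, s ∈ 𝒮, and s_max ∈ 𝒮 satisfies P_S(s_max) = 1/2 + δ for some δ > 0. Let r = min{|𝒮|, |𝒴|} − 1 and u(t) = max{t, √t}. Then for any optimal solution Q*, the induced Ŷ satisfies: E_{s∼P_S}[ TV(P_{Ŷ|S=s}, P_{Y|S=s_max}) ] ≤ (1/2 + 1/(4δ)) · u(rε). -/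

import Mathlib

open Finset

noncomputable section

variable {𝒳 𝒴 𝒮 : Type*} [Fintype 𝒳] [Fintype 𝒴] [Fintype 𝒮]

/-- Total variation distance between two finitely supported distributions on `𝒴`,
`TV(p, q) = (1/2) ∑ y, |p y - q y|`. -/
def TV (p q : 𝒴 → ℝ) : ℝ := (1 / 2) * ∑ y, |p y - q y|

/-- Marginal distribution of `(X, S)` under the joint `P` of `(X, Y, S)`. -/
def margXS (P : 𝒳 → 𝒴 → 𝒮 → ℝ) (x : 𝒳) (s : 𝒮) : ℝ := ∑ y, P x y s

/-- Marginal distribution of `(Y, S)`. -/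
def margYS (P : 𝒳 → 𝒴 → 𝒮 → ℝ) (y : 𝒴) (s : 𝒮) : ℝ := ∑ x, P x y s

/-- Marginal distribution of `S`. -/
def margS (P : 𝒳 → 𝒴 → 𝒮 → ℝ) (s : 𝒮) : ℝ := ∑ x, margXS P x s

/-- Marginal distribution of `X`. -/
def margX (P : 𝒳 → 𝒴 → 𝒮 → ℝ) (x : 𝒳) : ℝ := ∑ s, margXS P x s

/-- Conditional distribution of `Y` given `X = x, S = s`. -/
def condYXS (P : 𝒳 → 𝒴 → 𝒮 → ℝ) (x : 𝒳) (s : 𝒮) (y : 𝒴) : ℝ := P x y s / margXS P x s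

/-- Conditional distribution of `Y` given `S = s`. -/
def condYS (P : 𝒳 → 𝒴 → 𝒮 → ℝ) (s : 𝒮) (y : 𝒴) : ℝ := margYS P y s / margS P s

/-- The ratio `P(X=x | Y=y, S=s) / P(X=x | S=s)`. -/
def condRatio (P : 𝒳 → 𝒴 → 𝒮 → ℝ) (x : 𝒳) (y : 𝒴) (s : 𝒮) : ℝ :=
  (P x y s / margYS P y s) / (margXS P x s / margS P s)

/-- A conditional distribution `Q`: for every `(x, s)`, `Q x s` is a probability
distribution on labels. -/
def IsRule (Q : 𝒳 → 𝒮 → 𝒴 → ℝ) : Prop :=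
  (∀ x s y, 0 ≤ Q x s y) ∧ ∀ x s, ∑ y, Q x s y = 1

/-- The generalized objective: `E_{(x,s)∼P_{X,S}}[TV(Q_{Ŷ|X=x,S=s}, P_{Y|X=x,S=s})]`. -/
def objective (P : 𝒳 → 𝒴 → 𝒮 → ℝ) (Q : 𝒳 → 𝒮 → 𝒴 → ℝ) : ℝ :=
  ∑ x, ∑ s, margXS P x s * TV (Q x s) (condYXS P x s)

/-- Joint distribution of `(Ŷ, S)` induced by `Q · P_{X,S}`. -/
def jointYhatS (P : 𝒳 → 𝒴 → 𝒮 → ℝ) (Q : 𝒳 → 𝒮 → 𝒴 → ℝ) (yh : 𝒴) (s : 𝒮) : ℝ :=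
  ∑ x, margXS P x s * Q x s yh

/-- Marginal distribution of the prediction `Ŷ`. -/
def margYhat (P : 𝒳 → 𝒴 → 𝒮 → ℝ) (Q : 𝒳 → 𝒮 → 𝒴 → ℝ) (yh : 𝒴) : ℝ :=
  ∑ s, jointYhatS P Q yh s

/-- Conditional distribution of the prediction `Ŷ` given `S = s`. -/
def condYhatS (P : 𝒳 → 𝒴 → 𝒮 → ℝ) (Q : 𝒳 → 𝒮 → 𝒴 → ℝ) (s : 𝒮) (yh : 𝒴) : ℝ :=
  jointYhatS P Q yh s / margS P s

/-- Hirschfeld–Gebelein–Rényi maximal correlation between the prediction `Ŷ` and `S`. -/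
def maxCorr (P : 𝒳 → 𝒴 → 𝒮 → ℝ) (Q : 𝒳 → 𝒮 → 𝒴 → ℝ) : ℝ :=
  sSup { c : ℝ | ∃ f : 𝒴 → ℝ, ∃ g : 𝒮 → ℝ,
    (∑ yh, margYhat P Q yh * f yh = 0) ∧ (∑ s, margS P s * g s = 0) ∧
    (∑ yh, margYhat P Q yh * f yh ^ 2 = 1) ∧ (∑ s, margS P s * g s ^ 2 = 1) ∧
    c = ∑ yh, ∑ s, jointYhatS P Q yh s * f yh * g s }

lemma tv_nonneg' (p q : 𝒴 → ℝ) : 0 ≤ TV p q := by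
  unfold TV; positivity

lemma tv_symm' (p q : 𝒴 → ℝ) : TV p q = TV q p := by
  unfold TV
  rw [Finset.sum_congr rfl (fun y (_ : y ∈ univ) => abs_sub_comm (p y) (q y))]

lemma tv_triangle' (p q r : 𝒴 → ℝ) : TV p r ≤ TV p q + TV q r := by
  unfold TV
  have h := Finset.sum_le_sum (fun y (_ : y ∈ univ) => abs_sub_le (p y) (q y) (r y))
  rw [Finset.sum_add_distrib] at h
  linarith

lemma tv_self' (p : 𝒴 → ℝ) : TV p p = 0 := by
  unfold TV; simp

lemma col_bound {ι κ : Type*} [Fintype ι] [Fintype κ] [DecidableEq κ]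
    (j : ι → κ → ℝ) (hj : ∀ i k, 0 ≤ j i k)
    (htot : ∑ i, ∑ k, j i k = 1)
    (ρ : ℝ) (hρ0 : 0 ≤ ρ)
    (H : ∀ F : ι → ℝ, ∀ G : κ → ℝ,
      (∑ i, (∑ k, j i k) * F i = 0) → (∑ k, (∑ i, j i k) * G k = 0) →
      (∑ i, (∑ k, j i k) * F i ^ 2 = 1) → (∑ k, (∑ i, j i k) * G k ^ 2 = 1) →
      ∑ i, ∑ k, j i k * F i * G k ≤ ρ)
    (k₀ : κ) :
    ∑ i, |j i k₀ - (∑ k, j i k) * (∑ i', j i' k₀)|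
      ≤ ρ * Real.sqrt ((∑ i', j i' k₀) * (1 - ∑ i', j i' k₀)) := by
  classical
  set a : ι → ℝ := fun i => ∑ k, j i k with ha
  set b : ℝ := ∑ i', j i' k₀ with hb
  have ha0 : ∀ i, 0 ≤ a i := fun i => Finset.sum_nonneg fun k _ => hj i k
  have hjlea : ∀ i, j i k₀ ≤ a i := fun i =>
    Finset.single_le_sum (fun k _ => hj i k) (mem_univ k₀)
  have hbk : ∀ k : κ, 0 ≤ ∑ i, j i k := fun k => Finset.sum_nonneg fun i _ => hj i k
  have hatot : ∑ i, a i = 1 := htot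
  have hbtot : ∑ k, ∑ i, j i k = 1 := by rw [Finset.sum_comm]; exact htot
  have hb0 : 0 ≤ b := hbk k₀
  have hb1 : b ≤ 1 := by
    rw [hb, ← hbtot]
    exact Finset.single_le_sum (fun k _ => hbk k) (mem_univ k₀)
  have hΔsum : ∑ i, (j i k₀ - a i * b) = 0 := by
    rw [Finset.sum_sub_distrib, ← Finset.sum_mul, hatot, one_mul, ← hb, sub_self]
  set S : ℝ := ∑ i, |j i k₀ - a i * b| with hSdef
  rcases eq_or_lt_of_le (Finset.sum_nonneg (fun i (_ : i ∈ univ) => abs_nonneg (j i k₀ - a i * b))) with hS | hS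
  · rw [hSdef, ← hS]; positivity
  ·     -- 0 < b
    have hb0' : 0 < b := by
      rcases hb0.lt_or_eq with h | h
      · exact h
      · exfalso
        have h0 : ∑ i', j i' k₀ = 0 := by rw [← hb, ← h]
        have hz := (Finset.sum_eq_zero_iff_of_nonneg (fun i (_ : i ∈ univ) => hj i k₀)).1 h0
        have hS0 : S = 0 := by
          rw [hSdef]
          apply Finset.sum_eq_zero; intro i _
          rw [hz i (mem_univ i), ← h]
          simp
        linarith
    have hb1' : b < 1 := by
      rcases hb1.lt_or_eq with h | h
      · exact h
      · exfalso
        have hsum0 : ∑ k ∈ univ.erase k₀, ∑ i, j i k = 0 := by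
          have h2 : (∑ k ∈ univ.erase k₀, ∑ i, j i k) + b = 1 := by
            have h2' := Finset.sum_erase_add univ (fun k => ∑ i, j i k) (mem_univ k₀)
            rw [hbtot] at h2'
            rw [hb]; exact h2'
          linarith
        have hrest : ∀ k, k ≠ k₀ → ∀ i, j i k = 0 := by
          intro k hk i
          have hcol : ∑ i, j i k = 0 :=
            (Finset.sum_eq_zero_iff_of_nonneg (fun k _ => hbk k)).1 hsum0 k
              (mem_erase.2 ⟨hk, mem_univ k⟩)
          exact (Finset.sum_eq_zero_iff_of_nonneg (fun i (_ : i ∈ univ) => hj i k)).1 hcol i (mem_univ i)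
        have hai : ∀ i, a i = j i k₀ := by
          intro i
          have h2 := Finset.sum_erase_add univ (fun k => j i k) (mem_univ k₀)
          have hz : ∑ k ∈ univ.erase k₀, j i k = 0 :=
            Finset.sum_eq_zero (fun k hk => hrest k (Finset.ne_of_mem_erase hk) i)
          have : a i = ∑ k, j i k := rfl
          rw [this, ← h2, hz, zero_add]
        have hS0 : S = 0 := by
          rw [hSdef]
          apply Finset.sum_eq_zero; intro i _
          rw [hai i, h]
          simp
        linarith
    -- sign function
    set f : ι → ℝ := fun i => if 0 < j i k₀ - a i * b then 1 else -1 with hf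
    set μ : ℝ := ∑ i, a i * f i with hμ
    have hf2 : ∀ i, f i ^ 2 = 1 := by
      intro i; rw [hf]; dsimp only; split <;> norm_num
    have hfabs : ∀ i, |f i| = 1 := by
      intro i; rw [hf]; dsimp only; split <;> norm_num
    have hΔf : ∑ i, (j i k₀ - a i * b) * f i = S := by
      rw [hSdef]
      apply Finset.sum_congr rfl; intro i _
      rw [hf]; dsimp only
      split
      · rename_i h; rw [mul_one, abs_of_pos h]
      · rename_i h; rw [mul_neg_one, abs_of_nonpos (not_lt.1 h)]
    have hsum_af2 : ∑ i, a i * f i ^ 2 = 1 := by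
      rw [Finset.sum_congr rfl (fun i (_ : i ∈ univ) => by rw [hf2 i, mul_one])]
      exact hatot
    have hμabs : |μ| ≤ 1 := by
      calc |μ| ≤ ∑ i, |a i * f i| := by rw [hμ]; exact Finset.abs_sum_le_sum_abs _ _
        _ = ∑ i, a i := by
            apply Finset.sum_congr rfl; intro i _
            rw [abs_mul, hfabs, mul_one, abs_of_nonneg (ha0 i)]
        _ = 1 := hatot
    have hμsq : μ ^ 2 < 1 := by
      rcases lt_or_ge (μ ^ 2) 1 with h | h
      · exact h
      · exfalso
        have hμ2 : μ ^ 2 = 1 := by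
          have : μ ^ 2 ≤ 1 := by
            have := sq_abs μ
            nlinarith [abs_nonneg μ]
          linarith
        have hμ1 : μ = 1 ∨ μ = -1 := by
          have hfac : (μ - 1) * (μ + 1) = 0 := by nlinarith
          rcases mul_eq_zero.1 hfac with h' | h'
          · left; linarith
          · right; linarith
        have hzero : ∀ i, j i k₀ - a i * b = 0 := by
          rcases hμ1 with h1 | h1
          · -- all Δ ≥ 0
            have hsum : ∑ i, (a i - a i * f i) = 0 := by
              rw [Finset.sum_sub_distrib, hatot, ← hμ, h1, sub_self]
            have hterm := (Finset.sum_eq_zero_iff_of_nonneg (fun i (_ : i ∈ univ) => by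
              have : a i - a i * f i = a i * (1 - f i) := by ring
              rw [this]
              apply mul_nonneg (ha0 i)
              rw [hf]; dsimp only; split <;> norm_num)).1 hsum
            have hnn : ∀ i, 0 ≤ j i k₀ - a i * b := by
              intro i
              have h2 := hterm i (mem_univ i)
              by_cases hcond : 0 < j i k₀ - a i * b
              · exact hcond.le
              · have hfi : f i = -1 := by rw [hf]; dsimp only; rw [if_neg hcond]
                rw [hfi] at h2
                have haz : a i = 0 := by linarith
                have hjz : j i k₀ = 0 := le_antisymm (haz ▸ hjlea i) (hj i k₀)
                rw [hjz, haz]; simp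
            intro i
            exact (Finset.sum_eq_zero_iff_of_nonneg (fun i (_ : i ∈ univ) => hnn i)).1 hΔsum i (mem_univ i)
          · -- all Δ ≤ 0
            have hsum : ∑ i, (a i + a i * f i) = 0 := by
              rw [Finset.sum_add_distrib, hatot, ← hμ, h1]; ring
            have hterm := (Finset.sum_eq_zero_iff_of_nonneg (fun i (_ : i ∈ univ) => by
              have : a i + a i * f i = a i * (1 + f i) := by ring
              rw [this]
              apply mul_nonneg (ha0 i)
              rw [hf]; dsimp only; split <;> norm_num)).1 hsum
            have hnp : ∀ i, 0 ≤ -(j i k₀ - a i * b) := by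
              intro i
              have h2 := hterm i (mem_univ i)
              by_cases hcond : 0 < j i k₀ - a i * b
              · have hfi : f i = 1 := by rw [hf]; dsimp only; rw [if_pos hcond]
                rw [hfi] at h2
                have haz : a i = 0 := by linarith
                have hjz : j i k₀ = 0 := le_antisymm (haz ▸ hjlea i) (hj i k₀)
                exfalso; rw [hjz, haz] at hcond; simp at hcond
              · simpa using (not_lt.1 hcond)
            have hΔsum' : ∑ i, -(j i k₀ - a i * b) = 0 := by
              rw [Finset.sum_neg_distrib, hΔsum, neg_zero]
            intro i
            have := (Finset.sum_eq_zero_iff_of_nonneg (fun i (_ : i ∈ univ) => hnp i)).1 hΔsum' i (mem_univ i)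
            linarith
        have hS0 : S = 0 := by
          rw [hSdef]
          exact Finset.sum_eq_zero fun i _ => by rw [hzero i, abs_zero]
        linarith
    -- normalized test functions
    have hσpos : 0 < 1 - μ ^ 2 := by linarith
    set σ : ℝ := Real.sqrt (1 - μ ^ 2) with hσ
    have hσ0 : 0 < σ := Real.sqrt_pos.2 hσpos
    have hσsq : σ ^ 2 = 1 - μ ^ 2 := Real.sq_sqrt hσpos.le
    have hσle : σ ≤ 1 := by
      rw [hσ]
      calc Real.sqrt (1 - μ ^ 2) ≤ Real.sqrt 1 := Real.sqrt_le_sqrt (by nlinarith [sq_nonneg μ])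
        _ = 1 := Real.sqrt_one
    have hbbpos : 0 < b * (1 - b) := mul_pos hb0' (by linarith)
    set τ : ℝ := Real.sqrt (b * (1 - b)) with hτ
    have hτ0 : 0 < τ := Real.sqrt_pos.2 hbbpos
    have hτsq : τ ^ 2 = b * (1 - b) := Real.sq_sqrt hbbpos.le
    set F : ι → ℝ := fun i => (f i - μ) / σ with hF
    set G : κ → ℝ := fun k => ((if k = k₀ then (1:ℝ) else 0) - b) / τ with hG
    have c1 : ∑ i, a i * F i = 0 := by
      rw [hF]; dsimp only
      rw [Finset.sum_congr rfl (fun i (_ : i ∈ univ) =>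
        show a i * ((f i - μ) / σ) = (a i * f i - a i * μ) / σ by ring)]
      rw [← Finset.sum_div, Finset.sum_sub_distrib, ← hμ, ← Finset.sum_mul, hatot, one_mul, sub_self,
        zero_div]
    have c3 : ∑ i, a i * F i ^ 2 = 1 := by
      rw [hF]; dsimp only
      rw [Finset.sum_congr rfl (fun i (_ : i ∈ univ) =>
        show a i * ((f i - μ) / σ) ^ 2
          = (a i * f i ^ 2 - 2 * μ * (a i * f i) + μ ^ 2 * a i) / σ ^ 2 by
          field_simp; ring)]
      rw [← Finset.sum_div]
      rw [show ∑ i, (a i * f i ^ 2 - 2 * μ * (a i * f i) + μ ^ 2 * a i)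
          = (∑ i, a i * f i ^ 2) - 2 * μ * (∑ i, a i * f i) + μ ^ 2 * (∑ i, a i) by
        rw [Finset.sum_add_distrib, Finset.sum_sub_distrib, ← Finset.mul_sum, ← Finset.mul_sum]]
      rw [hsum_af2, ← hμ, hatot, hσsq]
      field_simp
      ring
    have c2 : ∑ k, (∑ i, j i k) * G k = 0 := by
      rw [hG]; dsimp only
      rw [Finset.sum_congr rfl (fun k (_ : k ∈ univ) =>
        show (∑ i, j i k) * (((if k = k₀ then (1:ℝ) else 0) - b) / τ)
          = ((if k = k₀ then (∑ i, j i k) else 0) - (∑ i, j i k) * b) / τ by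
          split <;> ring)]
      rw [← Finset.sum_div, Finset.sum_sub_distrib, Finset.sum_ite_eq' univ k₀ (fun k => ∑ i, j i k),
        if_pos (mem_univ k₀), ← Finset.sum_mul, hbtot, one_mul, ← hb, sub_self, zero_div]
    have c4 : ∑ k, (∑ i, j i k) * G k ^ 2 = 1 := by
      rw [hG]; dsimp only
      rw [Finset.sum_congr rfl (fun k (_ : k ∈ univ) =>
        show (∑ i, j i k) * (((if k = k₀ then (1:ℝ) else 0) - b) / τ) ^ 2
          = ((if k = k₀ then (∑ i, j i k) * (1 - 2 * b) else 0) + b ^ 2 * (∑ i, j i k)) / τ ^ 2 by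
          split <;> first | (field_simp; ring) | field_simp)]
      rw [← Finset.sum_div, Finset.sum_add_distrib,
        Finset.sum_ite_eq' univ k₀ (fun k => (∑ i, j i k) * (1 - 2 * b)),
        if_pos (mem_univ k₀), ← Finset.mul_sum, hbtot, ← hb, hτsq]
      have hb1ne : 1 - b ≠ 0 := by linarith
      field_simp
      ring
    have hval : ∑ i, ∑ k, j i k * F i * G k = S / (σ * τ) := by
      have hinner : ∀ i, ∑ k, j i k * ((if k = k₀ then (1:ℝ) else 0) - b)
          = j i k₀ - a i * b := by
        intro i
        rw [Finset.sum_congr rfl (fun k (_ : k ∈ univ) =>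
          show j i k * ((if k = k₀ then (1:ℝ) else 0) - b)
            = (if k = k₀ then j i k else 0) - j i k * b by split <;> ring)]
        rw [Finset.sum_sub_distrib, Finset.sum_ite_eq' univ k₀ (fun k => j i k),
          if_pos (mem_univ k₀), ← Finset.sum_mul]
      have hrow : ∀ i, ∑ k, j i k * F i * G k
          = (f i - μ) * (j i k₀ - a i * b) / (σ * τ) := by
        intro i
        have hterm : ∀ k, j i k * F i * G k
            = (f i - μ) * (j i k * ((if k = k₀ then (1:ℝ) else 0) - b)) / (σ * τ) := by
          intro k; rw [hF, hG]; dsimp only; ring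
        rw [Finset.sum_congr rfl (fun k (_ : k ∈ univ) => hterm k), ← Finset.sum_div,
          ← Finset.mul_sum, hinner i]
      rw [Finset.sum_congr rfl (fun i (_ : i ∈ univ) => hrow i), ← Finset.sum_div]
      congr 1
      rw [Finset.sum_congr rfl (fun i (_ : i ∈ univ) =>
        show (f i - μ) * (j i k₀ - a i * b)
          = (j i k₀ - a i * b) * f i - μ * (j i k₀ - a i * b) by ring)]
      rw [Finset.sum_sub_distrib, hΔf, ← Finset.mul_sum, hΔsum, mul_zero, sub_zero]
    have hc := H F G c1 c2 c3 c4
    rw [hval] at hc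
    have hS' : S ≤ ρ * (σ * τ) := by
      rw [div_le_iff₀ (mul_pos hσ0 hτ0)] at hc
      linarith
    calc S ≤ ρ * (σ * τ) := hS'
      _ ≤ ρ * τ := mul_le_mul_of_nonneg_left
          (by calc σ * τ ≤ 1 * τ := mul_le_mul_of_nonneg_right hσle hτ0.le
                _ = τ := one_mul τ) hρ0
      _ = ρ * Real.sqrt (b * (1 - b)) := by rw [hτ]

lemma sum_sqrt_le_sqrt_card_sub_one {κ : Type*} [Fintype κ]
    (p : κ → ℝ) (hp : ∀ k, 0 ≤ p k) (h1 : ∑ k, p k = 1) :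
    ∑ k, Real.sqrt (p k * (1 - p k)) ≤ Real.sqrt ((Fintype.card κ : ℝ) - 1) := by
  have hκ : Nonempty κ := by
    rcases isEmpty_or_nonempty κ with h | h
    · rw [Finset.univ_eq_empty, Finset.sum_empty] at h1; norm_num at h1
    · exact h
  have hcard : (1:ℝ) ≤ (Fintype.card κ : ℝ) := by
    have := Fintype.card_pos (α := κ)
    exact_mod_cast this
  have hcpos : (0:ℝ) < (Fintype.card κ : ℝ) := by linarith
  have hple : ∀ k, p k ≤ 1 := fun k =>
    h1 ▸ Finset.single_le_sum (fun k _ => hp k) (mem_univ k)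
  have hL0 : 0 ≤ ∑ k, Real.sqrt (p k * (1 - p k)) :=
    Finset.sum_nonneg fun k _ => Real.sqrt_nonneg _
  have hsq : ∀ k : κ, Real.sqrt (p k * (1 - p k)) ^ 2 = p k * (1 - p k) :=
    fun k => Real.sq_sqrt (mul_nonneg (hp k) (by linarith [hple k]))
  have hCS : (∑ k, Real.sqrt (p k * (1 - p k))) ^ 2
      ≤ (Fintype.card κ : ℝ) * ∑ k, p k * (1 - p k) := by
    have h := Finset.sum_mul_sq_le_sq_mul_sq univ (fun _ : κ => (1:ℝ))
      (fun k => Real.sqrt (p k * (1 - p k)))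
    simp only [one_mul, one_pow] at h
    rw [Finset.sum_const, card_univ, nsmul_eq_mul, mul_one] at h
    calc (∑ k, Real.sqrt (p k * (1 - p k))) ^ 2
        ≤ (Fintype.card κ : ℝ) * ∑ k, Real.sqrt (p k * (1 - p k)) ^ 2 := h
      _ = (Fintype.card κ : ℝ) * ∑ k, p k * (1 - p k) := by
          rw [Finset.sum_congr rfl (fun k _ => hsq k)]
  have hps : 1 ≤ (Fintype.card κ : ℝ) * ∑ k, p k ^ 2 := by
    have h := Finset.sum_mul_sq_le_sq_mul_sq univ (fun _ : κ => (1:ℝ)) p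
    simp only [one_mul, one_pow] at h
    rw [Finset.sum_const, card_univ, nsmul_eq_mul, mul_one, h1] at h
    simpa using h
  have hexp : ∑ k, p k * (1 - p k) = 1 - ∑ k, p k ^ 2 := by
    rw [Finset.sum_congr rfl (fun k (_ : k ∈ univ) =>
      show p k * (1 - p k) = p k - p k ^ 2 by ring)]
    rw [Finset.sum_sub_distrib, h1]
  have hsum2 : ∑ k, p k * (1 - p k) ≤ 1 - 1 / (Fintype.card κ : ℝ) := by
    rw [hexp]
    have h2 : 1 / (Fintype.card κ : ℝ) ≤ ∑ k, p k ^ 2 := by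
      rw [div_le_iff₀ hcpos]
      linarith [hps]
    linarith
  have hfin : (∑ k, Real.sqrt (p k * (1 - p k))) ^ 2 ≤ (Fintype.card κ : ℝ) - 1 := by
    calc (∑ k, Real.sqrt (p k * (1 - p k))) ^ 2
        ≤ (Fintype.card κ : ℝ) * ∑ k, p k * (1 - p k) := hCS
      _ ≤ (Fintype.card κ : ℝ) * (1 - 1 / (Fintype.card κ : ℝ)) :=
          mul_le_mul_of_nonneg_left hsum2 hcpos.le
      _ = (Fintype.card κ : ℝ) - 1 := by field_simp
  exact (Real.le_sqrt hL0 (by linarith)).2 hfin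

set_option maxHeartbeats 4000000 in
/-- **Theorem 3 (maximal correlation case).** In the generalized fair learning problem, if
the ratio `P(x|y,s)/P(x|s)` does not depend on `s` and `P_S(s_max) = 1/2 + δ` with
`δ > 0`, then with `r = min{|𝒮|, |𝒴|} - 1` and `u(t) = max{t, √t}`, any optimal
solution among rules with `ρ_m(Ŷ, S) ≤ ε` satisfies
`E_{s∼P_S}[TV(P_{Ŷ|S=s}, P_{Y|S=s_max})] ≤ (1/2 + 1/(4δ)) u(rε)`. -/
theorem generalized_maxcorr_fair_optimal_inductive_bias
    (P : 𝒳 → 𝒴 → 𝒮 → ℝ)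
    (hP0 : ∀ x y s, 0 ≤ P x y s)
    (hP1 : ∑ x, ∑ y, ∑ s, P x y s = 1)
    (hXS : ∀ x s, 0 < margXS P x s)
    (hYS : ∀ y s, 0 < margYS P y s)
    (φ : 𝒳 → 𝒴 → ℝ)
    (hφ : ∀ x y s, condRatio P x y s = φ x y)
    (smax : 𝒮) (δ : ℝ) (hδ : 0 < δ) (hsmax : margS P smax = 1 / 2 + δ)
    (ε : ℝ)
    (Q : 𝒳 → 𝒮 → 𝒴 → ℝ) (hQ : IsRule Q)
    (hfair : maxCorr P Q ≤ ε)
    (hopt : ∀ Q' : 𝒳 → 𝒮 → 𝒴 → ℝ, IsRule Q' → maxCorr P Q' ≤ ε →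
      objective P Q ≤ objective P Q') :
    ∑ s, margS P s * TV (condYhatS P Q s) (condYS P smax)
      ≤ (1 / 2 + 1 / (4 * δ)) *
        max (((min (Fintype.card 𝒮) (Fintype.card 𝒴) : ℝ) - 1) * ε)
          (Real.sqrt (((min (Fintype.card 𝒮) (Fintype.card 𝒴) : ℝ) - 1) * ε)) := by
  classical
  -- nonemptiness
  have hXne : Nonempty 𝒳 := by
    rcases isEmpty_or_nonempty 𝒳 with h | h
    · rw [Finset.univ_eq_empty, Finset.sum_empty] at hP1; norm_num at hP1
    · exact h
  have hSne : Nonempty 𝒮 := by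
    rcases isEmpty_or_nonempty 𝒮 with h | h
    · exact ⟨smax⟩
    · exact h
  have hYne : Nonempty 𝒴 := by
    rcases isEmpty_or_nonempty 𝒴 with h | h
    · exfalso
      have : ∀ x : 𝒳, (∑ y, ∑ s, P x y s) = 0 := fun x => by
        rw [Finset.univ_eq_empty, Finset.sum_empty]
      rw [Finset.sum_congr rfl (fun x _ => this x), Finset.sum_const, smul_zero] at hP1
      norm_num at hP1
    · exact h
  have hp0 : ∀ s, 0 < margS P s := fun s =>
    Finset.sum_pos (fun x _ => hXS x s) Finset.univ_nonempty
  have hptot : ∑ s, margS P s = 1 := by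
    unfold margS margXS
    rw [← hP1, Finset.sum_comm]
    exact Finset.sum_congr rfl fun x _ => Finset.sum_comm
  have hQ0 := hQ.1
  have hQ1 := hQ.2
  have hj0 : ∀ y s, 0 ≤ jointYhatS P Q y s :=
    fun y s => Finset.sum_nonneg fun x _ => mul_nonneg (hXS x s).le (hQ0 x s y)
  have hjcol : ∀ s, ∑ y, jointYhatS P Q y s = margS P s := by
    intro s
    unfold jointYhatS margS
    rw [Finset.sum_comm]
    exact Finset.sum_congr rfl fun x _ => by rw [← Finset.mul_sum, hQ1 x s, mul_one]
  have hjtot : ∑ y, ∑ s, jointYhatS P Q y s = 1 := by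
    rw [Finset.sum_comm, Finset.sum_congr rfl (fun s (_ : s ∈ univ) => hjcol s), hptot]
  have hmargdef : ∀ y, (∑ s, jointYhatS P Q y s) = margYhat P Q y := fun y => rfl
  have hmarg0 : ∀ y, 0 ≤ margYhat P Q y :=
    fun y => Finset.sum_nonneg fun s _ => hj0 y s
  have hmargtot : ∑ y, margYhat P Q y = 1 := hjtot
  -- ===== maximal correlation facts =====
  have hmc : maxCorr P Q = sSup { c : ℝ | ∃ f : 𝒴 → ℝ, ∃ g : 𝒮 → ℝ,
      (∑ yh, margYhat P Q yh * f yh = 0) ∧ (∑ s, margS P s * g s = 0) ∧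
      (∑ yh, margYhat P Q yh * f yh ^ 2 = 1) ∧ (∑ s, margS P s * g s ^ 2 = 1) ∧
      c = ∑ yh, ∑ s, jointYhatS P Q yh s * f yh * g s } := rfl
  have hbdd : ∀ c ∈ { c : ℝ | ∃ f : 𝒴 → ℝ, ∃ g : 𝒮 → ℝ,
      (∑ yh, margYhat P Q yh * f yh = 0) ∧ (∑ s, margS P s * g s = 0) ∧
      (∑ yh, margYhat P Q yh * f yh ^ 2 = 1) ∧ (∑ s, margS P s * g s ^ 2 = 1) ∧
      c = ∑ yh, ∑ s, jointYhatS P Q yh s * f yh * g s }, c ≤ 1 := by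
    rintro c ⟨f, g, h1, h2, h3, h4, rfl⟩
    have hcs := Finset.sum_mul_sq_le_sq_mul_sq univ
      (fun yk : 𝒴 × 𝒮 => Real.sqrt (jointYhatS P Q yk.1 yk.2) * f yk.1)
      (fun yk : 𝒴 × 𝒮 => Real.sqrt (jointYhatS P Q yk.1 yk.2) * g yk.2)
    have e1 : ∑ yk : 𝒴 × 𝒮, (Real.sqrt (jointYhatS P Q yk.1 yk.2) * f yk.1)
          * (Real.sqrt (jointYhatS P Q yk.1 yk.2) * g yk.2)
        = ∑ yh, ∑ s, jointYhatS P Q yh s * f yh * g s := by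
      rw [Fintype.sum_prod_type]
      exact Finset.sum_congr rfl fun y _ => Finset.sum_congr rfl fun s _ => by
        rw [show (Real.sqrt (jointYhatS P Q y s) * f y) * (Real.sqrt (jointYhatS P Q y s) * g s)
          = (Real.sqrt (jointYhatS P Q y s) * Real.sqrt (jointYhatS P Q y s)) * f y * g s by ring,
          Real.mul_self_sqrt (hj0 y s)]
    have e2 : ∑ yk : 𝒴 × 𝒮, (Real.sqrt (jointYhatS P Q yk.1 yk.2) * f yk.1) ^ 2 = 1 := by
      rw [Fintype.sum_prod_type]
      rw [Finset.sum_congr rfl (fun y (_ : y ∈ univ) => by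
        rw [Finset.sum_congr rfl (fun s (_ : s ∈ univ) =>
          show (Real.sqrt (jointYhatS P Q y s) * f y) ^ 2
            = jointYhatS P Q y s * f y ^ 2 by
            rw [mul_pow, Real.sq_sqrt (hj0 y s)]), ← Finset.sum_mul, hmargdef y])]
      exact h3
    have e3 : ∑ yk : 𝒴 × 𝒮, (Real.sqrt (jointYhatS P Q yk.1 yk.2) * g yk.2) ^ 2 = 1 := by
      rw [Fintype.sum_prod_type, Finset.sum_comm]
      rw [Finset.sum_congr rfl (fun s (_ : s ∈ univ) => by
        rw [Finset.sum_congr rfl (fun y (_ : y ∈ univ) =>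
          show (Real.sqrt (jointYhatS P Q y s) * g s) ^ 2
            = jointYhatS P Q y s * g s ^ 2 by
            rw [mul_pow, Real.sq_sqrt (hj0 y s)]), ← Finset.sum_mul, hjcol s])]
      exact h4
    rw [e1, e2, e3] at hcs
    nlinarith [hcs]
  have hbddAbove : BddAbove { c : ℝ | ∃ f : 𝒴 → ℝ, ∃ g : 𝒮 → ℝ,
      (∑ yh, margYhat P Q yh * f yh = 0) ∧ (∑ s, margS P s * g s = 0) ∧
      (∑ yh, margYhat P Q yh * f yh ^ 2 = 1) ∧ (∑ s, margS P s * g s ^ 2 = 1) ∧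
      c = ∑ yh, ∑ s, jointYhatS P Q yh s * f yh * g s } := ⟨1, fun c hc => hbdd c hc⟩
  have hρ0 : 0 ≤ maxCorr P Q := by
    rcases Set.eq_empty_or_nonempty { c : ℝ | ∃ f : 𝒴 → ℝ, ∃ g : 𝒮 → ℝ,
      (∑ yh, margYhat P Q yh * f yh = 0) ∧ (∑ s, margS P s * g s = 0) ∧
      (∑ yh, margYhat P Q yh * f yh ^ 2 = 1) ∧ (∑ s, margS P s * g s ^ 2 = 1) ∧
      c = ∑ yh, ∑ s, jointYhatS P Q yh s * f yh * g s } with h | h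
    · rw [hmc, h, Real.sSup_empty]
    · obtain ⟨c, f, g, h1, h2, h3, h4, hc⟩ := h
      have hneg : -c ∈ { c : ℝ | ∃ f : 𝒴 → ℝ, ∃ g : 𝒮 → ℝ,
          (∑ yh, margYhat P Q yh * f yh = 0) ∧ (∑ s, margS P s * g s = 0) ∧
          (∑ yh, margYhat P Q yh * f yh ^ 2 = 1) ∧ (∑ s, margS P s * g s ^ 2 = 1) ∧
          c = ∑ yh, ∑ s, jointYhatS P Q yh s * f yh * g s } := by
        refine ⟨fun y => -(f y), g, ?_, h2, ?_, h4, ?_⟩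
        · rw [← neg_zero, ← h1, ← Finset.sum_neg_distrib]
          exact Finset.sum_congr rfl fun y _ => by ring
        · rw [← h3]
          exact Finset.sum_congr rfl fun y _ => by ring
        · rw [hc, ← Finset.sum_neg_distrib]
          exact Finset.sum_congr rfl fun y _ => by
            rw [← Finset.sum_neg_distrib]
            exact Finset.sum_congr rfl fun s _ => by ring
      have h5 : c ≤ maxCorr P Q := by
        rw [hmc]; exact le_csSup hbddAbove ⟨f, g, h1, h2, h3, h4, hc⟩
      have h6 : -c ≤ maxCorr P Q := by
        rw [hmc]; exact le_csSup hbddAbove hneg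
      linarith
  have hρ1 : maxCorr P Q ≤ 1 := by
    rw [hmc]; exact Real.sSup_le hbdd zero_le_one
  have hε0 : 0 ≤ ε := le_trans hρ0 hfair
  -- ===== fairness ⇒ conditional dists of Ŷ are close to the marginal =====
  have Hyx : ∀ F : 𝒴 → ℝ, ∀ G : 𝒮 → ℝ,
      (∑ y, (∑ s, jointYhatS P Q y s) * F y = 0) →
      (∑ s, (∑ y, jointYhatS P Q y s) * G s = 0) →
      (∑ y, (∑ s, jointYhatS P Q y s) * F y ^ 2 = 1) →
      (∑ s, (∑ y, jointYhatS P Q y s) * G s ^ 2 = 1) →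
      ∑ y, ∑ s, jointYhatS P Q y s * F y * G s ≤ maxCorr P Q := by
    intro F G h1 h2 h3 h4
    rw [hmc]
    apply le_csSup hbddAbove
    refine ⟨F, G, h1, ?_, h3, ?_, rfl⟩
    · rw [← h2]; exact Finset.sum_congr rfl fun s _ => by rw [hjcol s]
    · rw [← h4]; exact Finset.sum_congr rfl fun s _ => by rw [hjcol s]
  have Hsy : ∀ F : 𝒮 → ℝ, ∀ G : 𝒴 → ℝ,
      (∑ s, (∑ y, jointYhatS P Q y s) * F s = 0) →
      (∑ y, (∑ s, jointYhatS P Q y s) * G y = 0) →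
      (∑ s, (∑ y, jointYhatS P Q y s) * F s ^ 2 = 1) →
      (∑ y, (∑ s, jointYhatS P Q y s) * G y ^ 2 = 1) →
      ∑ s, ∑ y, jointYhatS P Q y s * F s * G y ≤ maxCorr P Q := by
    intro F G h1 h2 h3 h4
    have e : ∑ s, ∑ y, jointYhatS P Q y s * F s * G y
        = ∑ y, ∑ s, jointYhatS P Q y s * G y * F s := by
      rw [Finset.sum_comm]
      exact Finset.sum_congr rfl fun y _ => Finset.sum_congr rfl fun s _ => by ring
    rw [e, hmc]
    apply le_csSup hbddAbove
    refine ⟨G, F, h2, ?_, h4, ?_, rfl⟩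
    · rw [← h1]; exact Finset.sum_congr rfl fun s _ => by rw [hjcol s]
    · rw [← h3]; exact Finset.sum_congr rfl fun s _ => by rw [hjcol s]
  have hcolS : ∀ s, ∑ y, |jointYhatS P Q y s - margYhat P Q y * margS P s|
      ≤ maxCorr P Q * Real.sqrt (margS P s * (1 - margS P s)) := by
    intro s
    have h := col_bound (fun y s => jointYhatS P Q y s) hj0 hjtot (maxCorr P Q) hρ0 Hyx s
    rw [Finset.sum_congr rfl (fun y (_ : y ∈ univ) => by
        rw [hmargdef y, hjcol s]), hjcol s] at h
    exact h
  have hcolY : ∀ y, ∑ s, |jointYhatS P Q y s - margYhat P Q y * margS P s|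
      ≤ maxCorr P Q * Real.sqrt (margYhat P Q y * (1 - margYhat P Q y)) := by
    intro y
    have htot' : ∑ s, ∑ y, jointYhatS P Q y s = 1 := by
      rw [Finset.sum_comm]; exact hjtot
    have h := col_bound (fun s y => jointYhatS P Q y s) (fun s y => hj0 y s)
      htot' (maxCorr P Q) hρ0 Hsy y
    rw [Finset.sum_congr rfl (fun s (_ : s ∈ univ) => by
        rw [hjcol s, hmargdef y,
          show jointYhatS P Q y s - margS P s * margYhat P Q y
            = jointYhatS P Q y s - margYhat P Q y * margS P s by ring]),
      hmargdef y] at h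
    exact h
  -- double-sum bound via min of cards
  have hBsum : ∑ s, ∑ y, |jointYhatS P Q y s - margYhat P Q y * margS P s|
      ≤ maxCorr P Q * Real.sqrt (min (Fintype.card 𝒮 : ℝ) (Fintype.card 𝒴 : ℝ) - 1) := by
    have hS' : ∑ s, ∑ y, |jointYhatS P Q y s - margYhat P Q y * margS P s|
        ≤ maxCorr P Q * Real.sqrt ((Fintype.card 𝒮 : ℝ) - 1) := by
      calc ∑ s, ∑ y, |jointYhatS P Q y s - margYhat P Q y * margS P s|
          ≤ ∑ s, maxCorr P Q * Real.sqrt (margS P s * (1 - margS P s)) :=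
            Finset.sum_le_sum fun s _ => hcolS s
        _ = maxCorr P Q * ∑ s, Real.sqrt (margS P s * (1 - margS P s)) := by
            rw [Finset.mul_sum]
        _ ≤ maxCorr P Q * Real.sqrt ((Fintype.card 𝒮 : ℝ) - 1) :=
            mul_le_mul_of_nonneg_left
              (sum_sqrt_le_sqrt_card_sub_one (fun s => margS P s) (fun s => (hp0 s).le) hptot)
              hρ0
    have hY' : ∑ s, ∑ y, |jointYhatS P Q y s - margYhat P Q y * margS P s|
        ≤ maxCorr P Q * Real.sqrt ((Fintype.card 𝒴 : ℝ) - 1) := by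
      rw [Finset.sum_comm]
      calc ∑ y, ∑ s, |jointYhatS P Q y s - margYhat P Q y * margS P s|
          ≤ ∑ y, maxCorr P Q * Real.sqrt (margYhat P Q y * (1 - margYhat P Q y)) :=
            Finset.sum_le_sum fun y _ => hcolY y
        _ = maxCorr P Q * ∑ y, Real.sqrt (margYhat P Q y * (1 - margYhat P Q y)) := by
            rw [Finset.mul_sum]
        _ ≤ maxCorr P Q * Real.sqrt ((Fintype.card 𝒴 : ℝ) - 1) :=
            mul_le_mul_of_nonneg_left
              (sum_sqrt_le_sqrt_card_sub_one (fun y => margYhat P Q y) hmarg0 hmargtot)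
              hρ0
    rcases le_total (Fintype.card 𝒮 : ℝ) (Fintype.card 𝒴 : ℝ) with h | h
    · rw [min_eq_left h]; exact hS'
    · rw [min_eq_right h]; exact hY'
  -- ===== identity: margS * TV(cond, marg) = (1/2) Σ |j - marg*p| =====
  have hBTV : ∀ s, margS P s * TV (condYhatS P Q s) (margYhat P Q)
      = (1/2) * ∑ y, |jointYhatS P Q y s - margYhat P Q y * margS P s| := by
    intro s
    unfold TV condYhatS
    rw [mul_left_comm]
    congr 1
    rw [Finset.mul_sum]
    apply Finset.sum_congr rfl
    intro y _
    rw [show jointYhatS P Q y s / margS P s - margYhat P Q y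
        = (jointYhatS P Q y s - margYhat P Q y * margS P s) / margS P s by
        rw [sub_div, mul_div_assoc, div_self (hp0 s).ne', mul_one]]
    rw [abs_div, abs_of_pos (hp0 s)]
    field_simp
    exact mul_div_cancel_left₀ _ (hp0 s).ne'
  -- ===== inductive bias identities =====
  have hKA : ∀ x y s, P x y s * margS P s = φ x y * (margYS P y s * margXS P x s) := by
    intro x y s
    have hys := (hYS y s).ne'
    have hxs := (hXS x s).ne'
    have hs := (hp0 s).ne'
    have h := hφ x y s
    unfold condRatio at h
    field_simp at h
    linear_combination h
  have hφ0 : ∀ x y, 0 ≤ φ x y := by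
    intro x y
    rw [← hφ x y smax]
    unfold condRatio
    exact div_nonneg (div_nonneg (hP0 x y smax) (hYS y smax).le)
      (div_nonneg (hXS x smax).le (hp0 smax).le)
  have hcond : ∀ x s y, condYXS P x s y = φ x y * condYS P s y := by
    intro x s y
    unfold condYXS condYS
    have hys := (hYS y s).ne'
    have hxs := (hXS x s).ne'
    have hs := (hp0 s).ne'
    field_simp
    linear_combination hKA x y s
  have hsumφ : ∀ y s, ∑ x, margXS P x s * φ x y = margS P s := by
    intro y s
    have hterm : ∀ x, margXS P x s * φ x y = P x y s * margS P s / margYS P y s := by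
      intro x
      rw [eq_div_iff (hYS y s).ne']
      linear_combination -hKA x y s
    rw [Finset.sum_congr rfl (fun x (_ : x ∈ univ) => hterm x), ← Finset.sum_div,
      ← Finset.sum_mul]
    rw [show (∑ x, P x y s) = margYS P y s from rfl]
    rw [mul_comm, mul_div_assoc, div_self (hYS y s).ne', mul_one]
  -- ===== comparator rule =====
  set Q' : 𝒳 → 𝒮 → 𝒴 → ℝ := fun x _ y => condYXS P x smax y with hQ'def
  have hQ'rule : IsRule Q' := by
    constructor
    · intro x s y
      exact div_nonneg (hP0 x y smax) (hXS x smax).le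
    · intro x s
      show ∑ y, condYXS P x smax y = 1
      unfold condYXS
      rw [← Finset.sum_div, show (∑ y, P x y smax) = margXS P x smax from rfl]
      exact div_self (hXS x smax).ne'
  have hjQ' : ∀ y s, jointYhatS P Q' y s = margS P s * condYS P smax y := by
    intro y s
    show ∑ x, margXS P x s * condYXS P x smax y = _
    rw [Finset.sum_congr rfl (fun x (_ : x ∈ univ) =>
      show margXS P x s * condYXS P x smax y
        = (margXS P x s * φ x y) * condYS P smax y by rw [hcond x smax y]; ring)]
    rw [← Finset.sum_mul, hsumφ y s]
  have hmargQ' : ∀ y, margYhat P Q' y = condYS P smax y := by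
    intro y
    show ∑ s, jointYhatS P Q' y s = _
    rw [Finset.sum_congr rfl (fun s (_ : s ∈ univ) => hjQ' y s), ← Finset.sum_mul, hptot,
      one_mul]
  have hfair' : maxCorr P Q' ≤ ε := by
    unfold maxCorr
    apply Real.sSup_le _ hε0
    rintro c ⟨f, g, h1, h2, h3, h4, rfl⟩
    have hval : ∑ y, ∑ s, jointYhatS P Q' y s * f y * g s = 0 := by
      rw [Finset.sum_congr rfl (fun y (_ : y ∈ univ) => by
        rw [Finset.sum_congr rfl (fun s (_ : s ∈ univ) =>
          show jointYhatS P Q' y s * f y * g s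
            = (condYS P smax y * f y) * (margS P s * g s) by rw [hjQ' y s]; ring),
          ← Finset.mul_sum, h2, mul_zero])]
      exact Finset.sum_const_zero
    rw [hval]
    exact hε0
  have hobjle : objective P Q ≤ objective P Q' := hopt Q' hQ'rule hfair'
  -- lower bound on objective
  have hlow : ∀ s, margS P s * TV (condYhatS P Q s) (condYS P s)
      ≤ ∑ x, margXS P x s * TV (Q x s) (condYXS P x s) := by
    intro s
    have e1 : margS P s * TV (condYhatS P Q s) (condYS P s)
        = (1/2) * ∑ y, |jointYhatS P Q y s - margYS P y s| := by
      unfold TV condYhatS condYS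
      rw [mul_left_comm]
      congr 1
      rw [Finset.mul_sum]
      apply Finset.sum_congr rfl
      intro y _
      rw [show jointYhatS P Q y s / margS P s - margYS P y s / margS P s
          = (jointYhatS P Q y s - margYS P y s) / margS P s by ring]
      rw [abs_div, abs_of_pos (hp0 s)]
      field_simp
      exact mul_div_cancel_left₀ _ (hp0 s).ne'
    rw [e1]
    have e2 : ∀ y, |jointYhatS P Q y s - margYS P y s|
        ≤ ∑ x, margXS P x s * |Q x s y - condYXS P x s y| := by
      intro y
      have h3 : jointYhatS P Q y s - margYS P y s
          = ∑ x, margXS P x s * (Q x s y - condYXS P x s y) := by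
        unfold jointYhatS margYS
        rw [Finset.sum_congr rfl (fun x (_ : x ∈ univ) =>
          show margXS P x s * (Q x s y - condYXS P x s y)
            = margXS P x s * Q x s y - P x y s by
            unfold condYXS
            rw [mul_sub, mul_comm (margXS P x s) (P x y s / margXS P x s),
              div_mul_cancel₀ _ (hXS x s).ne']), Finset.sum_sub_distrib]
      rw [h3]
      calc |∑ x, margXS P x s * (Q x s y - condYXS P x s y)|
          ≤ ∑ x, |margXS P x s * (Q x s y - condYXS P x s y)| :=
            Finset.abs_sum_le_sum_abs _ _
        _ = ∑ x, margXS P x s * |Q x s y - condYXS P x s y| :=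
            Finset.sum_congr rfl fun x _ => by
              rw [abs_mul, abs_of_pos (hXS x s)]
    calc (1/2) * ∑ y, |jointYhatS P Q y s - margYS P y s|
        ≤ (1/2) * ∑ y, ∑ x, margXS P x s * |Q x s y - condYXS P x s y| := by
          have := Finset.sum_le_sum (fun y (_ : y ∈ univ) => e2 y)
          linarith
      _ = (1/2) * ∑ x, margXS P x s * ∑ y, |Q x s y - condYXS P x s y| := by
          rw [Finset.sum_comm]
          congr 1
          exact Finset.sum_congr rfl fun x _ => (Finset.mul_sum _ _ _).symm
      _ = ∑ x, margXS P x s * TV (Q x s) (condYXS P x s) := by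
          unfold TV
          rw [Finset.mul_sum]
          exact Finset.sum_congr rfl fun x _ => by ring
  have hlower : ∑ s, margS P s * TV (condYhatS P Q s) (condYS P s) ≤ objective P Q := by
    unfold objective
    rw [Finset.sum_comm]
    exact Finset.sum_le_sum fun s _ => hlow s
  -- value of the comparator objective
  have hobjQ' : objective P Q' = ∑ s, margS P s * TV (condYS P smax) (condYS P s) := by
    unfold objective
    rw [Finset.sum_comm]
    apply Finset.sum_congr rfl
    intro s _
    have hTVx : ∀ x, TV (Q' x s) (condYXS P x s)
        = (1/2) * ∑ y, φ x y * |condYS P smax y - condYS P s y| := by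
      intro x
      show TV (fun y => condYXS P x smax y) (condYXS P x s) = _
      unfold TV
      congr 1
      apply Finset.sum_congr rfl
      intro y _
      show |condYXS P x smax y - condYXS P x s y| = φ x y * |condYS P smax y - condYS P s y|
      rw [hcond x smax y, hcond x s y, ← mul_sub, abs_mul, abs_of_nonneg (hφ0 x y)]
    have e1 : ∀ x, margXS P x s * TV (Q' x s) (condYXS P x s)
        = ∑ y, (1/2) * (margXS P x s * φ x y) * |condYS P smax y - condYS P s y| := by
      intro x
      rw [hTVx x, mul_left_comm, Finset.mul_sum, Finset.mul_sum]
      exact Finset.sum_congr rfl fun y _ => by ring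
    rw [Finset.sum_congr rfl (fun x (_ : x ∈ univ) => e1 x), Finset.sum_comm]
    have e2 : ∀ y, ∑ x, (1/2) * (margXS P x s * φ x y) * |condYS P smax y - condYS P s y|
        = (1/2) * margS P s * |condYS P smax y - condYS P s y| := by
      intro y
      rw [← Finset.sum_mul, ← Finset.mul_sum, hsumφ y s]
    rw [Finset.sum_congr rfl (fun y (_ : y ∈ univ) => e2 y)]
    unfold TV
    rw [mul_left_comm, Finset.mul_sum, Finset.mul_sum]
    exact Finset.sum_congr rfl fun y _ => by ring
  -- main comparison
  have hobj : ∑ s, margS P s * TV (condYhatS P Q s) (condYS P s)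
      ≤ ∑ s, margS P s * TV (condYS P smax) (condYS P s) :=
    le_trans hlower (le_of_le_of_eq hobjle hobjQ')
  -- ===== assembling =====
  have key1 : margS P smax * TV (condYhatS P Q smax) (condYS P smax)
      ≤ ∑ s ∈ univ.erase smax, margS P s * TV (condYhatS P Q s) (condYS P smax) := by
    have hsplit1 := Finset.sum_erase_add univ
      (fun s => margS P s * TV (condYhatS P Q s) (condYS P s)) (mem_univ smax)
    have hsplit2 := Finset.sum_erase_add univ
      (fun s => margS P s * TV (condYS P smax) (condYS P s)) (mem_univ smax)
    have hz : margS P smax * TV (condYS P smax) (condYS P smax) = 0 := by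
      rw [tv_self', mul_zero]
    have htri : ∀ s, margS P s * TV (condYS P smax) (condYS P s)
        ≤ margS P s * TV (condYhatS P Q s) (condYS P smax)
          + margS P s * TV (condYhatS P Q s) (condYS P s) := by
      intro s
      have h1 := tv_triangle' (condYS P smax) (condYhatS P Q s) (condYS P s)
      have h2 := tv_symm' (condYS P smax) (condYhatS P Q s)
      calc margS P s * TV (condYS P smax) (condYS P s)
          ≤ margS P s * (TV (condYhatS P Q s) (condYS P smax)
              + TV (condYhatS P Q s) (condYS P s)) := by
            apply mul_le_mul_of_nonneg_left _ (hp0 s).le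
            rw [h2] at h1
            linarith
        _ = _ := by ring
    have hsum_erase := Finset.sum_le_sum
      (fun s (_ : s ∈ univ.erase smax) => htri s)
    rw [Finset.sum_add_distrib] at hsum_erase
    linarith [hobj, hsplit1, hsplit2, hsum_erase, hz]
  have hTdecomp : ∀ s, TV (condYhatS P Q s) (condYS P smax)
      ≤ TV (condYhatS P Q s) (margYhat P Q) + TV (condYhatS P Q smax) (margYhat P Q)
        + TV (condYhatS P Q smax) (condYS P smax) := by
    intro s
    have h1 := tv_triangle' (condYhatS P Q s) (margYhat P Q) (condYS P smax)
    have h2 := tv_triangle' (margYhat P Q) (condYhatS P Q smax) (condYS P smax)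
    have h3 := tv_symm' (margYhat P Q) (condYhatS P Q smax)
    linarith
  have herase_p : ∑ s ∈ univ.erase smax, margS P s = 1 - margS P smax := by
    have h := Finset.sum_erase_add univ (fun s => margS P s) (mem_univ smax)
    linarith [hptot, h]
  have heraseE : ∑ s ∈ univ.erase smax, margS P s * TV (condYhatS P Q s) (margYhat P Q)
      = (∑ s, margS P s * TV (condYhatS P Q s) (margYhat P Q))
        - margS P smax * TV (condYhatS P Q smax) (margYhat P Q) := by
    have h := Finset.sum_erase_add univ
      (fun s => margS P s * TV (condYhatS P Q s) (margYhat P Q)) (mem_univ smax)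
    linarith [h]
  -- notation
  set A := ∑ s, margS P s * TV (condYhatS P Q s) (condYS P smax) with hA
  set B := ∑ s, margS P s * TV (condYhatS P Q s) (margYhat P Q) with hB
  set W := TV (condYhatS P Q smax) (margYhat P Q) with hW
  set Tm := TV (condYhatS P Q smax) (condYS P smax) with hTm
  have hW0 : 0 ≤ W := tv_nonneg' _ _
  have hTm0 : 0 ≤ Tm := tv_nonneg' _ _
  have hkey2 : 2 * δ * (Tm + W) ≤ B := by
    have h4 : ∑ s ∈ univ.erase smax, margS P s * TV (condYhatS P Q s) (condYS P smax)
        ≤ ∑ s ∈ univ.erase smax, (margS P s * TV (condYhatS P Q s) (margYhat P Q)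
            + margS P s * (W + Tm)) := by
      apply Finset.sum_le_sum
      intro s _
      calc margS P s * TV (condYhatS P Q s) (condYS P smax)
          ≤ margS P s * (TV (condYhatS P Q s) (margYhat P Q) + W + Tm) :=
            mul_le_mul_of_nonneg_left (hTdecomp s) (hp0 s).le
        _ = margS P s * TV (condYhatS P Q s) (margYhat P Q) + margS P s * (W + Tm) := by
            ring
    rw [Finset.sum_add_distrib, ← Finset.sum_mul, herase_p, heraseE] at h4
    have := le_trans key1 h4
    rw [hsmax] at this
    nlinarith [this]
  have hfinal1 : A ≤ B + (W + Tm) := by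
    rw [hA, hB]
    have h5 : ∀ s, margS P s * TV (condYhatS P Q s) (condYS P smax)
        ≤ margS P s * TV (condYhatS P Q s) (margYhat P Q) + margS P s * (W + Tm) := by
      intro s
      calc margS P s * TV (condYhatS P Q s) (condYS P smax)
          ≤ margS P s * (TV (condYhatS P Q s) (margYhat P Q) + W + Tm) :=
            mul_le_mul_of_nonneg_left (hTdecomp s) (hp0 s).le
        _ = margS P s * TV (condYhatS P Q s) (margYhat P Q) + margS P s * (W + Tm) := by
            ring
    have h6 := Finset.sum_le_sum (fun s (_ : s ∈ univ) => h5 s)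
    rw [Finset.sum_add_distrib, ← Finset.sum_mul, hptot, one_mul] at h6
    exact h6
  -- bound on B
  have hBbound : B ≤ (1/2) * (maxCorr P Q
      * Real.sqrt (min (Fintype.card 𝒮 : ℝ) (Fintype.card 𝒴 : ℝ) - 1)) := by
    rw [hB, Finset.sum_congr rfl (fun s (_ : s ∈ univ) => hBTV s), ← Finset.mul_sum]
    linarith [hBsum]
  -- relating to u(rε)
  have hrcast : ((min (Fintype.card 𝒮) (Fintype.card 𝒴) : ℕ) : ℝ)
      = min (Fintype.card 𝒮 : ℝ) (Fintype.card 𝒴 : ℝ) := by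
    push_cast; ring
  have hr0 : 0 ≤ min (Fintype.card 𝒮 : ℝ) (Fintype.card 𝒴 : ℝ) - 1 := by
    have h1 : (1:ℝ) ≤ (Fintype.card 𝒮 : ℝ) := by
      have := Fintype.card_pos (α := 𝒮); exact_mod_cast this
    have h2 : (1:ℝ) ≤ (Fintype.card 𝒴 : ℝ) := by
      have := Fintype.card_pos (α := 𝒴); exact_mod_cast this
    rcases le_total (Fintype.card 𝒮 : ℝ) (Fintype.card 𝒴 : ℝ) with h | h
    · rw [min_eq_left h]; linarith
    · rw [min_eq_right h]; linarith
  have hsqrtle : maxCorr P Q * Real.sqrt (min (Fintype.card 𝒮 : ℝ) (Fintype.card 𝒴 : ℝ) - 1)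
      ≤ Real.sqrt ((min (Fintype.card 𝒮 : ℝ) (Fintype.card 𝒴 : ℝ) - 1) * ε) := by
    set r := min (Fintype.card 𝒮 : ℝ) (Fintype.card 𝒴 : ℝ) - 1 with hr
    have hρsq : maxCorr P Q ^ 2 ≤ ε := by nlinarith [hρ0, hρ1, hfair]
    have h1 : maxCorr P Q * Real.sqrt r = Real.sqrt (maxCorr P Q ^ 2 * r) := by
      rw [Real.sqrt_mul (sq_nonneg _), Real.sqrt_sq hρ0]
    rw [h1]
    apply Real.sqrt_le_sqrt
    calc maxCorr P Q ^ 2 * r ≤ ε * r := mul_le_mul_of_nonneg_right hρsq hr0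
      _ = r * ε := by ring
  -- conclusion
  have humax : Real.sqrt ((min (Fintype.card 𝒮 : ℝ) (Fintype.card 𝒴 : ℝ) - 1) * ε)
      ≤ max ((min (Fintype.card 𝒮 : ℝ) (Fintype.card 𝒴 : ℝ) - 1) * ε)
          (Real.sqrt ((min (Fintype.card 𝒮 : ℝ) (Fintype.card 𝒴 : ℝ) - 1) * ε)) :=
    le_max_right _ _
  have hu0 : 0 ≤ max ((min (Fintype.card 𝒮 : ℝ) (Fintype.card 𝒴 : ℝ) - 1) * ε)
      (Real.sqrt ((min (Fintype.card 𝒮 : ℝ) (Fintype.card 𝒴 : ℝ) - 1) * ε)) :=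
    le_trans (Real.sqrt_nonneg _) humax
  have hBu : B ≤ (1/2) * max ((min (Fintype.card 𝒮 : ℝ) (Fintype.card 𝒴 : ℝ) - 1) * ε)
      (Real.sqrt ((min (Fintype.card 𝒮 : ℝ) (Fintype.card 𝒴 : ℝ) - 1) * ε)) := by
    calc B ≤ (1/2) * (maxCorr P Q
        * Real.sqrt (min (Fintype.card 𝒮 : ℝ) (Fintype.card 𝒴 : ℝ) - 1)) := hBbound
      _ ≤ (1/2) * Real.sqrt ((min (Fintype.card 𝒮 : ℝ) (Fintype.card 𝒴 : ℝ) - 1) * ε) := by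
          linarith [hsqrtle]
      _ ≤ _ := by linarith [humax]
  -- final arithmetic
  have hgoal : A ≤ (1/2 + 1/(4*δ)) * max ((min (Fintype.card 𝒮 : ℝ) (Fintype.card 𝒴 : ℝ) - 1) * ε)
      (Real.sqrt ((min (Fintype.card 𝒮 : ℝ) (Fintype.card 𝒴 : ℝ) - 1) * ε)) := by
    set u := max ((min (Fintype.card 𝒮 : ℝ) (Fintype.card 𝒴 : ℝ) - 1) * ε)
      (Real.sqrt ((min (Fintype.card 𝒮 : ℝ) (Fintype.card 𝒴 : ℝ) - 1) * ε)) with hu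
    have h4δ : (0:ℝ) < 4 * δ := by linarith
    rw [show (1/2 + 1/(4*δ)) * u = ((2*δ + 1) * u) / (4*δ) by field_simp; ring]
    rw [le_div_iff₀ h4δ]
    nlinarith [hfinal1, hkey2, hBu, hu0, hδ, hW0, hTm0]
  -- cast fix
  convert hgoal using 3 <;> try rw [← hrcast] 
  all_goals norm_num
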